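/- Let N and d be positive natural numbers and let G be a simple graph on the vertex set Fin N in which every vertex has degree at most d. Then the edge set of G can be partitioned into 6d classes such that each class, viewed as a subgraph on the same vertex set, is a star forest, i.e., every connected component of each class is a star (equivalently, every edge of each class has an endpoint whose degree within that class is exactly 1). -/

import Mathlib

/-- A simple graph is a *star forest* (galaxy) if every connected component is a star:
each component contains a center `c` such that every other vertex of the component is
adjacent to `c` and every edge of the component has `c` as an endpoint. (A single
vertex and a single edge both count as stars.) -/
def IsStarForest {V : Type*} (G : SimpleGraph V) : Prop :=
  ∀ v : V, ∃ c : V, G.Reachable v c ∧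
    (∀ u : V, G.Reachable v u → u ≠ c → G.Adj u c) ∧
    (∀ u w : V, G.Adj u w → G.Reachable v u → u = c ∨ w = c)

/-- Greedy coloring: a finite graph with all degrees `< n` has a proper `n`-coloring. -/
lemma exists_greedy_coloring {V : Type*} [Fintype V] [DecidableEq V] (H : SimpleGraph V)
    [DecidableRel H.Adj] (n : ℕ)
    (hdeg : ∀ v : V, (H.neighborFinset v).card < n) :
    ∃ f : V → Fin n, ∀ u v, H.Adj u v → f u ≠ f v := by
  cases isEmpty_or_nonempty V with
  | inl h => exact ⟨fun v => (h.false v).elim, fun u v _ => (h.false u).elim⟩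
  | inr h =>
    have hn : 0 < n := lt_of_le_of_lt (Nat.zero_le _) (hdeg (Classical.arbitrary V))
    suffices hs : ∀ s : Finset V, ∃ f : V → Fin n,
        ∀ u ∈ s, ∀ v ∈ s, H.Adj u v → f u ≠ f v by
      obtain ⟨f, hf⟩ := hs Finset.univ
      exact ⟨f, fun u v h => hf u (Finset.mem_univ u) v (Finset.mem_univ v) h⟩
    intro s
    induction s using Finset.induction with
    | empty => exact ⟨fun _ => ⟨0, hn⟩, fun u hu => absurd hu (Finset.notMem_empty u)⟩
    | @insert a s ha ih =>
      obtain ⟨f, hf⟩ := ih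
      have : ¬ (Finset.univ : Finset (Fin n)) ⊆ (H.neighborFinset a).image f := by
        intro hsub
        have h1 := Finset.card_le_card hsub
        have h2 : ((H.neighborFinset a).image f).card < n :=
          lt_of_le_of_lt (Finset.card_image_le) (hdeg a)
        simp only [Finset.card_univ, Fintype.card_fin] at h1
        omega
      obtain ⟨c, _, hc⟩ := Finset.not_subset.mp this
      refine ⟨Function.update f a c, ?_⟩
      intro u hu v hv huv
      rcases Finset.mem_insert.mp hu with hua | hu
      · rcases Finset.mem_insert.mp hv with hva | hv
        · exact absurd (hua ▸ hva ▸ huv) (H.irrefl)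
        · have hvne : v ≠ a := fun h => ha (h ▸ hv)
          subst hua
          rw [Function.update_self, Function.update_of_ne hvne]
          intro h
          exact hc (Finset.mem_image.mpr ⟨v, (H.mem_neighborFinset _ _).mpr huv, h.symm⟩)
      · rcases Finset.mem_insert.mp hv with hva | hv
        · have hune : u ≠ a := fun h => ha (h ▸ hu)
          subst hva
          rw [Function.update_self, Function.update_of_ne hune]
          intro h
          exact hc (Finset.mem_image.mpr ⟨u, (H.mem_neighborFinset _ _).mpr huv.symm, h⟩)
        · have hune : u ≠ a := fun h => ha (h ▸ hu)
          have hvne : v ≠ a := fun h => ha (h ▸ hv)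
          rw [Function.update_of_ne hune, Function.update_of_ne hvne]
          exact hf u hu v hv huv

/-- In a graph where each vertex has at most one neighbor, reachability is trivial. -/
lemma matching_reachable {V : Type*} {H : SimpleGraph V}
    (huniq : ∀ x y z : V, H.Adj x y → H.Adj x z → y = z)
    {v u : V} (hr : H.Reachable v u) : u = v ∨ H.Adj v u := by
  obtain ⟨p⟩ := hr
  induction p with
  | nil => exact Or.inl rfl
  | @cons a b c h p ih =>
    rcases ih with rfl | hadj
    · exact Or.inr h
    · exact Or.inl (huniq b c a hadj h.symm)

lemma matching_isStarForest {V : Type*} (H : SimpleGraph V)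
    (huniq : ∀ x y z : V, H.Adj x y → H.Adj x z → y = z) : IsStarForest H := by
  intro v
  refine ⟨v, SimpleGraph.Reachable.refl v, ?_, ?_⟩
  · intro u hu hne
    rcases matching_reachable huniq hu with rfl | hadj
    · exact absurd rfl hne
    · exact hadj.symm
  · intro u w hadj hu
    rcases matching_reachable huniq hu with rfl | hvu
    · exact Or.inl rfl
    · exact Or.inr (huniq u w v hadj hvu.symm)

/-- **Star decomposition of a graph.** The edges of a simple graph on
`Fin N` with maximum degree at most `d` can be partitioned into `6 * d` classes such
that every class is a star forest (every connected component of each class is a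
star). -/
theorem star_decomposition (N d : ℕ) (hN : 0 < N) (hd : 0 < d)
    (G : SimpleGraph (Fin N)) (hdeg : ∀ v : Fin N, (G.neighborSet v).ncard ≤ d) :
    ∃ c : Sym2 (Fin N) → Fin (6 * d),
      ∀ i : Fin (6 * d),
        IsStarForest (SimpleGraph.fromRel (fun x y => G.Adj x y ∧ c s(x, y) = i)) := by
  classical
  -- the line graph of `G`
  set L : SimpleGraph (Sym2 (Fin N)) :=
    { Adj := fun e f => e ≠ f ∧ e ∈ G.edgeSet ∧ f ∈ G.edgeSet ∧ ∃ v, v ∈ e ∧ v ∈ f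
      symm := ⟨by
        rintro e f ⟨hne, he, hf, v, hv1, hv2⟩
        exact ⟨hne.symm, hf, he, v, hv2, hv1⟩⟩
      loopless := ⟨fun e h => h.1 rfl⟩ } with hL
  have hGdeg : ∀ v : Fin N, (G.neighborFinset v).card ≤ d := by
    intro v
    rw [SimpleGraph.neighborFinset_def, ← Set.ncard_eq_toFinset_card']
    exact hdeg v
  have hLdeg : ∀ e : Sym2 (Fin N), (L.neighborFinset e).card < 6 * d := by
    intro e
    induction e using Sym2.inductionOn with
    | hf a b =>
      have hsub : L.neighborFinset s(a, b) ⊆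
          (G.neighborFinset a).image (fun u => s(a, u)) ∪
          (G.neighborFinset b).image (fun u => s(b, u)) := by
        intro f hf
        rw [SimpleGraph.mem_neighborFinset] at hf
        obtain ⟨hne, _, hfE, v, hv1, hv2⟩ := hf
        rw [Finset.mem_union]
        rw [Sym2.mem_iff] at hv1
        rcases hv1 with rfl | rfl
        · left
          obtain ⟨u, rfl⟩ := Sym2.mem_iff_exists.mp hv2
          exact Finset.mem_image.mpr
            ⟨u, (G.mem_neighborFinset _ _).mpr (G.mem_edgeSet.mp hfE), rfl⟩
        · right
          obtain ⟨u, rfl⟩ := Sym2.mem_iff_exists.mp hv2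
          exact Finset.mem_image.mpr
            ⟨u, (G.mem_neighborFinset _ _).mpr (G.mem_edgeSet.mp hfE), rfl⟩
      have h1 := Finset.card_le_card hsub
      have h2 := Finset.card_union_le ((G.neighborFinset a).image (fun u => s(a, u)))
        ((G.neighborFinset b).image (fun u => s(b, u)))
      have h3 : ((G.neighborFinset a).image (fun u => s(a, u))).card ≤ d :=
        le_trans Finset.card_image_le (hGdeg a)
      have h4 : ((G.neighborFinset b).image (fun u => s(b, u))).card ≤ d :=
        le_trans Finset.card_image_le (hGdeg b)
      omega
  obtain ⟨C, hC⟩ := exists_greedy_coloring L (6 * d) hLdeg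
  refine ⟨C, fun i => ?_⟩
  apply matching_isStarForest
  intro x y z hxy hxz
  have key : ∀ p q : Fin N,
      (SimpleGraph.fromRel (fun x y => G.Adj x y ∧ C s(x, y) = i)).Adj p q →
      G.Adj p q ∧ C s(p, q) = i := by
    intro p q h
    rw [SimpleGraph.fromRel_adj] at h
    rcases h.2 with h' | h'
    · exact h'
    · exact ⟨h'.1.symm, by rw [Sym2.eq_swap]; exact h'.2⟩
  obtain ⟨haxy, hcxy⟩ := key x y hxy
  obtain ⟨haxz, hcxz⟩ := key x z hxz
  by_contra hne
  have hEne : s(x, y) ≠ s(x, z) := fun h => hne (Sym2.congr_right.mp h)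
  have : L.Adj s(x, y) s(x, z) :=
    ⟨hEne, G.mem_edgeSet.mpr haxy, G.mem_edgeSet.mpr haxz,
      x, Sym2.mem_mk_left x y, Sym2.mem_mk_left x z⟩
  exact hC _ _ this (hcxy.trans hcxz.symm)
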